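/- arXiv:1306.3170 — 3 statements merged into one kernel-verified Lean document; each statement's English description precedes it below -/
import Mathlib

section
/- The Farey graph F contains no 4-clique: there do not exist four pairwise distinct vertices of F that are pairwise adjacent. (Equivalently, there is no set of four vertices of F any two of which are at graph distance 1.) -/
/-- The Farey graph on vertex set `Option ℚ`, where `none` represents `∞ = 1/0`.
Two distinct rationals `a`, `b` are adjacent iff `|a.num * b.den - b.num * a.den| = 1`;
`∞` is adjacent to a rational `a` iff `a.den = 1`. -/
def Farey : SimpleGraph (Option ℚ) where
  Adj u v :=
    match u, v with
    | none, none => False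
    | none, some a => a.den = 1
    | some a, none => a.den = 1
    | some a, some b => a ≠ b ∧ |a.num * (b.den : ℤ) - b.num * (a.den : ℤ)| = 1
  symm := by
    constructor
    intro u v h
    match u, v with
    | none, some a => exact h
    | some a, none => exact h
    | some a, some b =>
      refine ⟨h.1.symm, ?_⟩
      rw [abs_sub_comm]
      exact h.2
  loopless := by
    constructor
    intro u h
    match u with
    | none => exact h
    | some a => exact h.1 rfl

/-- The mod-2 primitive vector of a Farey vertex. -/
def fareyVec : Option ℚ → ZMod 2 × ZMod 2
  | none => (1, 0)
  | some a => ((a.num : ZMod 2), (a.den : ZMod 2))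

lemma farey_adj_det {u v : Option ℚ} (h : Farey.Adj u v) :
    (fareyVec u).1 * (fareyVec v).2 - (fareyVec v).1 * (fareyVec u).2 = 1 := by
  match u, v with
  | none, none => exact h.elim
  | none, some a =>
      have hd : a.den = 1 := h
      simp [fareyVec, hd]
  | some a, none =>
      have hd : a.den = 1 := h
      simp [fareyVec, hd]
  | some a, some b =>
      have h2 : |a.num * (b.den : ℤ) - b.num * (a.den : ℤ)| = 1 := h.2
      rcases abs_eq (by norm_num : (0:ℤ) ≤ 1) |>.mp h2 with he | he
      · have := congrArg (Int.cast : ℤ → ZMod 2) he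
        push_cast at this
        simpa [fareyVec] using this
      · have := congrArg (Int.cast : ℤ → ZMod 2) he
        push_cast at this
        have : ((a.num : ZMod 2) * (b.den : ZMod 2) - (b.num : ZMod 2) * (a.den : ZMod 2)) = -1 := this
        simpa [fareyVec] using this.trans (by decide)

lemma zmod2_pigeonhole (x₁ x₂ x₃ x₄ : ZMod 2 × ZMod 2)
    (h12 : x₁.1 * x₂.2 - x₂.1 * x₁.2 = 1) (h13 : x₁.1 * x₃.2 - x₃.1 * x₁.2 = 1)
    (h14 : x₁.1 * x₄.2 - x₄.1 * x₁.2 = 1) (h23 : x₂.1 * x₃.2 - x₃.1 * x₂.2 = 1)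
    (h24 : x₂.1 * x₄.2 - x₄.1 * x₂.2 = 1) (h34 : x₃.1 * x₄.2 - x₄.1 * x₃.2 = 1) :
    False := by
  revert h12 h13 h14 h23 h24 h34
  revert x₁ x₂ x₃ x₄
  decide

/-- The Farey graph contains no 4-clique: there do not exist four pairwise distinct
vertices that are pairwise adjacent. -/
theorem farey_no_four_clique :
    ¬ ∃ v₁ v₂ v₃ v₄ : Option ℚ,
      v₁ ≠ v₂ ∧ v₁ ≠ v₃ ∧ v₁ ≠ v₄ ∧ v₂ ≠ v₃ ∧ v₂ ≠ v₄ ∧ v₃ ≠ v₄ ∧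
      Farey.Adj v₁ v₂ ∧ Farey.Adj v₁ v₃ ∧ Farey.Adj v₁ v₄ ∧
      Farey.Adj v₂ v₃ ∧ Farey.Adj v₂ v₄ ∧ Farey.Adj v₃ v₄ := by
  rintro ⟨v₁, v₂, v₃, v₄, -, -, -, -, -, -, h12, h13, h14, h23, h24, h34⟩
  exact zmod2_pigeonhole (fareyVec v₁) (fareyVec v₂) (fareyVec v₃) (fareyVec v₄)
    (farey_adj_det h12) (farey_adj_det h13) (farey_adj_det h14)
    (farey_adj_det h23) (farey_adj_det h24) (farey_adj_det h34)
end

section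
/- In the Farey graph F, every edge lies in exactly two triangles: for any two adjacent vertices u and v of F, there are exactly two vertices w of F adjacent to both u and v. -/
namespace FareyAux

/-- vertex to primitive vector -/
def toV : Option ℚ → ℤ × ℤ
  | none => (1, 0)
  | some a => (a.num, (a.den : ℤ))

/-- determinant -/
def dt (A B : ℤ × ℤ) : ℤ := A.1 * B.2 - B.1 * A.2

lemma toV_snd_nonneg (w : Option ℚ) : 0 ≤ (toV w).2 := by
  cases w <;> simp [toV]

lemma toV_snd_zero {w : Option ℚ} (h : (toV w).2 = 0) : (toV w).1 = 1 := by
  cases w with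
  | none => rfl
  | some a =>
    exfalso
    simp only [toV] at h
    have := a.den_nz
    omega

lemma toV_inj : Function.Injective toV := by
  intro u v h
  cases u with
  | none => cases v with
    | none => rfl
    | some b =>
      exfalso
      have h2 := congrArg Prod.snd h
      simp only [toV] at h2
      have := b.den_nz
      omega
  | some a => cases v with
    | none =>
      exfalso
      have h2 := congrArg Prod.snd h
      simp only [toV] at h2
      have := a.den_nz
      omega
    | some b =>
      have h1 := congrArg Prod.fst h
      have h2 := congrArg Prod.snd h
      simp only [toV] at h1 h2
      have h3 : a.den = b.den := by omega
      exact congrArg some (Rat.ext h1 h3)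

lemma sign_unique {w w' : Option ℚ} {V : ℤ × ℤ}
    (h : toV w = V ∨ toV w = -V) (h' : toV w' = V ∨ toV w' = -V) : w = w' := by
  have main : ∀ (x y : Option ℚ), toV x = V → toV y = -V → x = y := by
    intro x y hx hy
    exfalso
    have e1 : (toV x).2 = -(toV y).2 := by rw [hx, hy]; simp
    have n1 := toV_snd_nonneg x; have n2 := toV_snd_nonneg y
    have z1 : (toV x).2 = 0 := by omega
    have z2 : (toV y).2 = 0 := by omega
    have f1 := toV_snd_zero z1; have f2 := toV_snd_zero z2
    have e2 : (toV x).1 = -(toV y).1 := by rw [hx, hy]; simp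
    omega
  rcases h with h | h <;> rcases h' with h' | h'
  · exact toV_inj (h.trans h'.symm)
  · exact main w w' h h'
  · exact (main w' w h' h).symm
  · exact toV_inj (h.trans h'.symm)

lemma adj_iff (u v : Option ℚ) : Farey.Adj u v ↔ |dt (toV u) (toV v)| = 1 := by
  cases u with
  | none => cases v with
    | none => simp [Farey, toV, dt]
    | some a =>
      show a.den = 1 ↔ _
      simp only [toV, dt]
      have e : (1:ℤ) * (a.den:ℤ) - a.num * 0 = (a.den:ℤ) := by ring
      rw [e]
      constructor
      · intro h; simp [h]
      · intro h
        rcases (abs_eq (by norm_num : (0:ℤ) ≤ 1)).mp h with h2 | h2 <;> omega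
  | some a => cases v with
    | none =>
      show a.den = 1 ↔ _
      simp only [toV, dt]
      have e : a.num * 0 - 1 * (a.den:ℤ) = -(a.den:ℤ) := by ring
      rw [e, abs_neg]
      constructor
      · intro h; simp [h]
      · intro h
        rcases (abs_eq (by norm_num : (0:ℤ) ≤ 1)).mp h with h2 | h2 <;> omega
    | some b =>
      show (a ≠ b ∧ _) ↔ _
      simp only [toV, dt]
      constructor
      · intro h; exact h.2
      · intro h
        refine ⟨?_, h⟩
        rintro rfl
        simp at h

lemma exists_vertex_pos (p q : ℤ) (hq : 0 < q) (h : IsCoprime p q) :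
    ∃ w : Option ℚ, toV w = (p, q) := by
  have hg : Int.gcd p q = 1 := Int.isCoprime_iff_gcd_eq_one.mp h
  have hqn : q.toNat ≠ 0 := by omega
  have hco : p.natAbs.Coprime q.toNat := by
    have : q.natAbs = q.toNat := by omega
    rw [← this]; exact hg
  refine ⟨some ⟨p, q.toNat, hqn, hco⟩, ?_⟩
  simp only [toV, Prod.mk.injEq]
  exact ⟨trivial, by omega⟩

lemma exists_vertex (p q : ℤ) (h : IsCoprime p q) :
    ∃ w : Option ℚ, toV w = (p, q) ∨ toV w = -(p, q) := by
  rcases lt_trichotomy q 0 with hq | hq | hq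
  · obtain ⟨w, hw⟩ := exists_vertex_pos (-p) (-q) (by omega) h.neg_neg
    exact ⟨w, Or.inr (by rw [hw]; simp [Prod.ext_iff])⟩
  · subst hq
    rcases Int.isUnit_iff.mp (isCoprime_zero_right.mp h) with h1 | h1
    · exact ⟨none, Or.inl (by simp [toV, h1])⟩
    · exact ⟨none, Or.inr (by simp [toV, h1, Prod.ext_iff])⟩
  · obtain ⟨w, hw⟩ := exists_vertex_pos p q hq h
    exact ⟨w, Or.inl hw⟩

lemma key_identity (A B W : ℤ × ℤ) :
    dt A B * W.1 = dt W B * A.1 + dt A W * B.1 ∧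
    dt A B * W.2 = dt W B * A.2 + dt A W * B.2 := by
  constructor <;> (simp only [dt]; ring)

lemma four_options {A B W : ℤ × ℤ} (hAB : |dt A B| = 1)
    (h1 : |dt A W| = 1) (h2 : |dt B W| = 1) :
    W = A + B ∨ W = A - B ∨ W = -(A + B) ∨ W = -(A - B) := by
  obtain ⟨k1, k2⟩ := key_identity A B W
  have hWB : dt W B = -dt B W := by simp only [dt]; ring
  rcases abs_eq (by norm_num : (0:ℤ) ≤ 1) |>.mp hAB with e | e <;>
  rcases abs_eq (by norm_num : (0:ℤ) ≤ 1) |>.mp h1 with f | f <;>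
  rcases abs_eq (by norm_num : (0:ℤ) ≤ 1) |>.mp h2 with g | g <;>
  rw [e, f, hWB, g] at k1 k2 <;>
  simp only [Prod.ext_iff, Prod.fst_add, Prod.snd_add, Prod.fst_sub, Prod.snd_sub,
    Prod.fst_neg, Prod.snd_neg] <;>
  first
    | exact Or.inl ⟨by linarith, by linarith⟩
    | exact Or.inr (Or.inl ⟨by linarith, by linarith⟩)
    | exact Or.inr (Or.inr (Or.inl ⟨by linarith, by linarith⟩))
    | exact Or.inr (Or.inr (Or.inr ⟨by linarith, by linarith⟩))

lemma dt_self_add (A B : ℤ × ℤ) : dt A (A + B) = dt A B := by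
  simp only [dt, Prod.fst_add, Prod.snd_add]; ring

lemma dt_self_sub (A B : ℤ × ℤ) : dt A (A - B) = -dt A B := by
  simp only [dt, Prod.fst_sub, Prod.snd_sub]; ring

lemma dt_other_add (A B : ℤ × ℤ) : dt B (A + B) = -dt A B := by
  simp only [dt, Prod.fst_add, Prod.snd_add]; ring

lemma dt_other_sub (A B : ℤ × ℤ) : dt B (A - B) = -dt A B := by
  simp only [dt, Prod.fst_sub, Prod.snd_sub]; ring

lemma dt_neg_right (A B : ℤ × ℤ) : dt A (-B) = -dt A B := by
  simp only [dt, Prod.fst_neg, Prod.snd_neg]; ring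

lemma coprime_of_dt {A C : ℤ × ℤ} (h : |dt A C| = 1) : IsCoprime C.1 C.2 := by
  rcases (abs_eq (by norm_num : (0:ℤ) ≤ 1)).mp h with h | h <;>
    simp only [dt] at h
  · exact ⟨-A.2, A.1, by linear_combination h⟩
  · exact ⟨A.2, -A.1, by linear_combination -h⟩

lemma mediants_ne {A B : ℤ × ℤ} (hAB : |dt A B| = 1) {V W : ℤ × ℤ}
    (hV : V = A + B ∨ V = -(A + B)) (hW : W = A - B ∨ W = -(A - B)) : V ≠ W := by
  have hA0 : ¬(A.1 = 0 ∧ A.2 = 0) := by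
    rintro ⟨h1, h2⟩; rw [show dt A B = 0 by simp [dt, h1, h2]] at hAB; simp at hAB
  have hB0 : ¬(B.1 = 0 ∧ B.2 = 0) := by
    rintro ⟨h1, h2⟩; rw [show dt A B = 0 by simp [dt, h1, h2]] at hAB; simp at hAB
  rcases hV with rfl | rfl <;> rcases hW with rfl | rfl <;>
    (intro hh;
     simp only [Prod.ext_iff, Prod.fst_add, Prod.snd_add, Prod.fst_sub, Prod.snd_sub,
       Prod.fst_neg, Prod.snd_neg] at hh;
     omega)

end FareyAux

/-- In the Farey graph, every edge lies in exactly two triangles: any two adjacent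
vertices have exactly two common neighbors. -/
theorem farey_edge_in_exactly_two_triangles (u v : Option ℚ) (huv : Farey.Adj u v) :
    {w : Option ℚ | Farey.Adj u w ∧ Farey.Adj v w}.ncard = 2 := by
  classical
  open FareyAux in
  set A := FareyAux.toV u with hA
  set B := FareyAux.toV v with hB
  have hAB : |dt A B| = 1 := (adj_iff u v).mp huv
  obtain ⟨w1, hw1⟩ := exists_vertex (A + B).1 (A + B).2
    (coprime_of_dt (A := A) (by rw [dt_self_add]; exact hAB))
  obtain ⟨w2, hw2⟩ := exists_vertex (A - B).1 (A - B).2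
    (coprime_of_dt (A := A) (by rw [dt_self_sub, abs_neg]; exact hAB))
  have hw1' : toV w1 = A + B ∨ toV w1 = -(A + B) := hw1
  have hw2' : toV w2 = A - B ∨ toV w2 = -(A - B) := hw2
  have hne : w1 ≠ w2 := by
    intro h
    exact mediants_ne hAB hw1' hw2' (congrArg FareyAux.toV h)
  have hset : {w : Option ℚ | Farey.Adj u w ∧ Farey.Adj v w} = {w1, w2} := by
    ext w
    simp only [Set.mem_setOf_eq, Set.mem_insert_iff, Set.mem_singleton_iff]
    constructor
    · rintro ⟨h1, h2⟩
      rw [adj_iff] at h1 h2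
      rcases four_options hAB h1 h2 with h | h | h | h
      · exact Or.inl (sign_unique (Or.inl h) hw1')
      · exact Or.inr (sign_unique (Or.inl h) hw2')
      · exact Or.inl (sign_unique (Or.inr h) hw1')
      · exact Or.inr (sign_unique (Or.inr h) hw2')
    · rintro (rfl | rfl)
      · refine ⟨(adj_iff u w).mpr ?_, (adj_iff v w).mpr ?_⟩
        · rcases hw1' with h | h
          · rw [h, dt_self_add]; exact hAB
          · rw [h, dt_neg_right, abs_neg, dt_self_add]; exact hAB
        · rcases hw1' with h | h
          · rw [h, dt_other_add, abs_neg]; exact hAB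
          · rw [h, dt_neg_right, abs_neg, dt_other_add, abs_neg]; exact hAB
      · refine ⟨(adj_iff u w).mpr ?_, (adj_iff v w).mpr ?_⟩
        · rcases hw2' with h | h
          · rw [h, dt_self_sub, abs_neg]; exact hAB
          · rw [h, dt_neg_right, abs_neg, dt_self_sub, abs_neg]; exact hAB
        · rcases hw2' with h | h
          · rw [h, dt_other_sub, abs_neg]; exact hAB
          · rw [h, dt_neg_right, abs_neg, dt_other_sub, abs_neg]; exact hAB
  rw [hset]
  exact Set.ncard_pair hne
end

section
/- For every natural number n ≥ 1, there is an isometric embedding of ℤⁿ with the ℓ¹ metric into the n-fold box product of the Farey graph: there exists a map f : (Fin n → ℤ) → (Fin n → Option ℚ) such that for all x, y : Fin n → ℤ, the graph distance in Fⁿ between f x and f y equals ∑ i, |x i − y i|. -/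
/-- The n-fold box product of the Farey graph: vertices are functions
`Fin n → Option ℚ`, and `x`, `y` are adjacent iff they are adjacent in one
coordinate (in the Farey graph) and agree in all other coordinates. -/
def FareyPow (n : ℕ) : SimpleGraph (Fin n → Option ℚ) where
  Adj x y := ∃ i : Fin n, Farey.Adj (x i) (y i) ∧ ∀ j : Fin n, j ≠ i → x j = y j
  symm := by
    constructor
    rintro x y ⟨i, hadj, heq⟩
    exact ⟨i, hadj.symm, fun j hj => (heq j hj).symm⟩
  loopless := by
    constructor
    rintro x ⟨i, hadj, -⟩
    exact Farey.loopless.irrefl _ hadj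

section Med
lemma ratLt (a b : ℚ) : a < b ↔ a.num * b.den < b.num * a.den := by
  conv_lhs => rw [← Rat.num_div_den a, ← Rat.num_div_den b]
  rw [div_lt_div_iff₀ (by positivity) (by positivity)]
  constructor <;> intro h <;> exact_mod_cast h

lemma mediant {a b x : ℚ} (hadj : |a.num * b.den - b.num * a.den| = 1)
    (h1 : a < x) (h2 : x < b) : (a.den : ℤ) + b.den ≤ x.den := by
  rw [ratLt] at h1 h2
  have hX : 1 ≤ x.num * a.den - a.num * x.den := by omega
  have hY : 1 ≤ b.num * x.den - x.num * b.den := by omega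
  have hbd : (1:ℤ) ≤ b.den := by exact_mod_cast b.pos
  have had : (1:ℤ) ≤ a.den := by exact_mod_cast a.pos
  have hxd : (1:ℤ) ≤ x.den := by exact_mod_cast x.pos
  have hid : (b.den:ℤ) * (x.num * a.den - a.num * x.den)
      + (a.den:ℤ) * (b.num * x.den - x.num * b.den)
      = (x.den:ℤ) * (b.num * a.den - a.num * b.den) := by ring
  have hE : b.num * (a.den:ℤ) - a.num * b.den = 1 ∨ b.num * (a.den:ℤ) - a.num * b.den = -1 := by
    rw [abs_sub_comm] at hadj
    rcases (abs_eq (by norm_num : (0:ℤ) ≤ 1)).mp hadj with h | h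
    · left; linarith
    · right; linarith
  have hb1 : (b.den:ℤ) * 1 ≤ (b.den:ℤ) * (x.num * a.den - a.num * x.den) :=
    mul_le_mul_of_nonneg_left hX (by positivity)
  have ha1 : (a.den:ℤ) * 1 ≤ (a.den:ℤ) * (b.num * x.den - x.num * b.den) :=
    mul_le_mul_of_nonneg_left hY (by positivity)
  rcases hE with h | h
  · rw [h] at hid; linarith
  · rw [h] at hid; linarith
end Med



namespace FE

def p : ℕ → ℤ
  | 0 => 2
  | 1 => 5
  | (k+2) => 2 * p (k+1) + p k

def q : ℕ → ℕ
  | 0 => 1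
  | 1 => 2
  | (k+2) => 2 * q (k+1) + q k

lemma qpos : ∀ k, 1 ≤ q k
  | 0 => le_refl 1
  | 1 => by norm_num [q]
  | (k+2) => by have := qpos (k+1); have := qpos k; simp only [q]; omega

lemma qlt : ∀ k, q k < q (k+1)
  | 0 => by norm_num [q]
  | (k+1) => by have := qpos k; have := qpos (k+1); simp only [q]; omega

lemma qge (k : ℕ) : k + 1 ≤ q k := by
  induction k with
  | zero => exact le_refl 1
  | succ m ih => have := qlt m; omega

def det (k : ℕ) : ℤ := p (k+1) * (q k : ℤ) - p k * (q (k+1) : ℤ)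

lemma det_succ (k : ℕ) : det (k+1) = - det k := by
  show p (k+2) * (q (k+1) : ℤ) - p (k+1) * (q (k+2) : ℤ) = _
  have hp : p (k+2) = 2 * p (k+1) + p k := rfl
  have hq : (q (k+2) : ℤ) = 2 * (q (k+1) : ℤ) + (q k : ℤ) := by
    have : q (k+2) = 2 * q (k+1) + q k := rfl
    push_cast [this]; ring
  rw [hp, hq]; unfold det; ring

lemma detPM : ∀ k, det k = 1 ∨ det k = -1
  | 0 => by left; rfl
  | (k+1) => by rcases detPM k with h | h <;> rw [det_succ, h] <;> simp

lemma det2 (k : ℕ) : p (k+2) * (q k : ℤ) - p k * (q (k+2) : ℤ) = 2 * det k := by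
  have hp : p (k+2) = 2 * p (k+1) + p k := rfl
  have hq : (q (k+2) : ℤ) = 2 * (q (k+1) : ℤ) + (q k : ℤ) := by
    have : q (k+2) = 2 * q (k+1) + q k := rfl
    push_cast [this]; ring
  rw [hp, hq]; unfold det; ring

lemma cop (k : ℕ) : (p k).natAbs.Coprime (q k) := by
  have h : IsCoprime (p k) ((q k : ℤ)) := by
    rcases detPM k with h | h
    · exact ⟨-(q (k+1) : ℤ), p (k+1), by unfold det at h; linarith [h]⟩
    · exact ⟨(q (k+1) : ℤ), -p (k+1), by unfold det at h; linarith [h]⟩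
  have := Int.isCoprime_iff_gcd_eq_one.mp h
  simpa [Int.gcd, Int.natAbs_natCast] using this

def c (k : ℕ) : ℚ := Rat.mk' (p k) (q k) (by have := qpos k; omega) (cop k)

@[simp] lemma c_num (k : ℕ) : (c k).num = p k := rfl
@[simp] lemma c_den (k : ℕ) : (c k).den = q k := rfl

lemma c0_eq : c 0 = 2 := by
  have : (c 0) = ((c 0).num : ℚ) / ((c 0).den : ℚ) := (Rat.num_div_den _).symm
  rw [this, c_num, c_den]; norm_num [p, q]

lemma c_lt_iff (j k : ℕ) : c j < c k ↔ p j * (q k : ℤ) < p k * (q j : ℤ) := by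
  rw [ratLt]; simp

lemma cRAdj (k : ℕ) : |(c k).num * ((c (k+1)).den : ℤ) - (c (k+1)).num * ((c k).den : ℤ)| = 1 := by
  simp only [c_num, c_den]
  have : p k * (q (k+1) : ℤ) - p (k+1) * (q k : ℤ) = - det k := by unfold det; ring
  rw [this, abs_neg]
  rcases detPM k with h | h <;> rw [h] <;> norm_num

lemma not_cRAdj2 (k : ℕ) : ¬ (|(c k).num * ((c (k+2)).den : ℤ) - (c (k+2)).num * ((c k).den : ℤ)| = 1) := by
  simp only [c_num, c_den]
  have : p k * (q (k+2) : ℤ) - p (k+2) * (q k : ℤ) = - (2 * det k) := by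
    have := det2 k; linarith
  rw [this, abs_neg]
  rcases detPM k with h | h <;> rw [h] <;> norm_num

lemma c_ne_succ (k : ℕ) : c k ≠ c (k+1) := by
  intro h
  have := congrArg Rat.den h
  simp only [c_den] at this
  exact absurd this (Nat.ne_of_lt (qlt k))

lemma c_ne_succ2 (k : ℕ) : c k ≠ c (k+2) := by
  intro h
  have := congrArg Rat.den h
  simp only [c_den] at this
  have h1 := qlt k; have h2 : q (k+1) < q (k+2) := qlt (k+1)
  omega

def RAdj (u v : ℚ) : Prop := |u.num * (v.den : ℤ) - v.num * (u.den : ℤ)| = 1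

lemma RAdj.symm' {u v : ℚ} (h : RAdj u v) : RAdj v u := by
  unfold RAdj at *; rw [abs_sub_comm] at h; exact h

def Btw (a b x : ℚ) : Prop := (a < x ∧ x < b) ∨ (b < x ∧ x < a)

lemma Btw.symm {a b x : ℚ} (h : Btw a b x) : Btw b a x := by unfold Btw at *; tauto

lemma btw_trans {a b m x : ℚ} (h1 : Btw a b m) (h2 : Btw m b x) : Btw a b x := by
  unfold Btw at *
  rcases h1 with ⟨u1, u2⟩ | ⟨u1, u2⟩ <;> rcases h2 with ⟨v1, v2⟩ | ⟨v1, v2⟩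
  · left; constructor <;> linarith
  · left; constructor <;> linarith
  · right; constructor <;> linarith
  · right; constructor <;> linarith

lemma btw_not_rev {a b m : ℚ} (h : Btw a b m) : ¬ Btw m b a := by
  unfold Btw at *; rcases h with ⟨u1, u2⟩ | ⟨u1, u2⟩ <;> rintro (⟨v1, v2⟩ | ⟨v1, v2⟩) <;> linarith

lemma btw_ne_left {a b x : ℚ} (h : Btw a b x) : x ≠ a := by
  rcases h with ⟨u1, u2⟩ | ⟨u1, u2⟩ <;> intro he <;> subst he <;> linarith

lemma btw_ne_right {a b x : ℚ} (h : Btw a b x) : x ≠ b := by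
  rcases h with ⟨u1, u2⟩ | ⟨u1, u2⟩ <;> intro he <;> subst he <;> linarith

lemma btw_out {a b u : ℚ} (h1 : ¬ Btw a b u) (h2 : u ≠ a) (h3 : u ≠ b) :
    (u < a ∧ u < b) ∨ (a < u ∧ b < u) := by
  unfold Btw at h1; push_neg at h1
  obtain ⟨h1a, h1b⟩ := h1
  rcases lt_trichotomy u a with h | h | h
  · rcases lt_trichotomy u b with g | g | g
    · exact Or.inl ⟨h, g⟩
    · exact absurd g h3
    · exact absurd (h1b g) (by linarith)
  · exact absurd h h2
  · rcases lt_trichotomy u b with g | g | g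
    · exact absurd (h1a h) (by linarith)
    · exact absurd g h3
    · exact Or.inr ⟨h, g⟩


-- order facts
lemma c0_lt_c1 : c 0 < c 1 := by
  rw [c_lt_iff]
  have h : p 1 * ((q 0 : ℕ) : ℤ) - p 0 * ((q 1 : ℕ) : ℤ) = 1 := by norm_num [p, q]
  omega

lemma btw_c (k : ℕ) : Btw (c k) (c (k+1)) (c (k+2)) := by
  have h2 := det2 k
  have hs : det (k+1) = - det k := det_succ k
  rcases detPM k with h | h
  · left
    constructor
    · rw [c_lt_iff]; omega
    · rw [c_lt_iff]
      have : det (k+1) = p (k+2) * (q (k+1):ℤ) - p (k+1) * (q (k+2):ℤ) := rfl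
      omega
  · right
    constructor
    · rw [c_lt_iff]
      have : det (k+1) = p (k+2) * (q (k+1):ℤ) - p (k+1) * (q (k+2):ℤ) := rfl
      omega
    · rw [c_lt_iff]; omega

def In : ℕ → ℚ → Prop
  | 0, w => 2 < w
  | (k+1), w => Btw (c k) (c (k+1)) w

def Ep : ℕ → ℚ → Prop
  | 0, w => w = c 0
  | (k+1), w => w = c k ∨ w = c (k+1)

def Cl (k : ℕ) (w : ℚ) : Prop := In k w ∨ Ep k w

lemma in_c_succ (k : ℕ) : In k (c (k+1)) := by
  cases k with
  | zero =>
    show (2:ℚ) < c 1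
    rw [← c0_eq]; exact c0_lt_c1
  | succ m => exact btw_c m

lemma in_succ {k : ℕ} {w : ℚ} (h : In (k+1) w) : In k w := by
  cases k with
  | zero =>
    rcases h with ⟨h1, h2⟩ | ⟨h1, h2⟩
    · show (2:ℚ) < w; rw [← c0_eq]; exact h1
    · exact absurd (lt_trans h2 c0_lt_c1) (by linarith)
  | succ m =>
    exact btw_trans (btw_c m) (Btw.symm h)

lemma in_chain {k j : ℕ} {w : ℚ} (h : In k w) (hj : j ≤ k) : In j w := by
  induction k with
  | zero => rw [Nat.le_zero.mp hj]; exact h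
  | succ m ih =>
    rcases Nat.eq_or_lt_of_le hj with he | hl
    · exact he ▸ h
    · exact ih (in_succ h) (by omega)


lemma cl_succ {k : ℕ} {w : ℚ} (h : Cl (k+1) w) : Cl k w := by
  rcases h with h | h
  · exact Or.inl (in_succ h)
  · rcases h with h | h
    · subst h
      cases k with
      | zero => exact Or.inr rfl
      | succ m => exact Or.inr (Or.inr rfl)
    · subst h
      exact Or.inl (in_c_succ k)

lemma cl_chain {k j : ℕ} {w : ℚ} (h : Cl k w) (hj : j ≤ k) : Cl j w := by
  induction k with
  | zero => rw [Nat.le_zero.mp hj]; exact h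
  | succ m ih =>
    rcases Nat.eq_or_lt_of_le hj with he | hl
    · exact he ▸ h
    · exact ih (cl_succ h) (by omega)

lemma in_den_bound {k : ℕ} {w : ℚ} (h : In (k+1) w) : (q k : ℤ) + (q (k+1) : ℤ) ≤ w.den := by
  have hadj := cRAdj k
  rcases h with ⟨h1, h2⟩ | ⟨h1, h2⟩
  · have := mediant hadj h1 h2
    simpa using this
  · have := mediant (RAdj.symm' hadj) h1 h2
    simp only [c_den] at this
    omega

lemma not_in_big (w : ℚ) : ¬ In (w.den + 1) w := by
  intro h
  have hb := in_den_bound h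
  have h1 := qge w.den
  have h2 := qge (w.den + 1)
  omega

lemma ep_den {k : ℕ} {w : ℚ} (h : Ep k w) : ∃ j, k ≤ j + 1 ∧ w = c j := by
  cases k with
  | zero => exact ⟨0, by omega, h⟩
  | succ m => rcases h with h | h
              · exact ⟨m, by omega, h⟩
              · exact ⟨m + 1, by omega, h⟩

lemma cl_den_bound {k : ℕ} {w : ℚ} (h : Cl k w) : k ≤ w.den := by
  rcases h with h | h
  · cases k with
    | zero => omega
    | succ m =>
      have := in_den_bound h
      have h1 := qge m
      omega
  · obtain ⟨j, hj, he⟩ := ep_den h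
    have hd : w.den = q j := by rw [he]; rfl
    have := qge j
    omega

lemma not_cl_big (w : ℚ) : ¬ Cl (w.den + 1) w := fun h => by
  have := cl_den_bound h; omega

noncomputable def iota (w : ℚ) : ℕ := sInf {k | ¬ In k w}
noncomputable def kappa (w : ℚ) : ℕ := sInf {k | ¬ Cl k w}

lemma in_iff {k : ℕ} {w : ℚ} : In k w ↔ k < iota w := by
  constructor
  · intro h
    by_contra hc
    push_neg at hc
    have hmem : iota w ∈ {k | ¬ In k w} := Nat.sInf_mem ⟨w.den + 1, not_in_big w⟩
    exact hmem (in_chain h hc)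
  · intro h
    have := Nat.notMem_of_lt_sInf h
    simpa using this

lemma cl_iff {k : ℕ} {w : ℚ} : Cl k w ↔ k < kappa w := by
  constructor
  · intro h
    by_contra hc
    push_neg at hc
    have hmem : kappa w ∈ {k | ¬ Cl k w} := Nat.sInf_mem ⟨w.den + 1, not_cl_big w⟩
    exact hmem (cl_chain h hc)
  · intro h
    have := Nat.notMem_of_lt_sInf h
    simpa using this

lemma iota_le_kappa (w : ℚ) : iota w ≤ kappa w := by
  by_contra hc
  push_neg at hc
  have h1 : In (kappa w) w := in_iff.mpr hc
  have h2 : kappa w < kappa w := cl_iff.mp (Or.inl h1)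
  omega


lemma in_lt {j k : ℕ} (h : k < j) : In k (c j) := by
  cases j with
  | zero => omega
  | succ m => exact in_chain (in_c_succ m) (by omega)

lemma not_in_self (j : ℕ) : ¬ In j (c j) := by
  cases j with
  | zero => show ¬ (2:ℚ) < c 0; rw [c0_eq]; exact lt_irrefl 2
  | succ m => exact fun h => (btw_ne_right h) rfl

lemma iotaC (j : ℕ) : iota (c j) = j := by
  have h1 : iota (c j) ≤ j := Nat.sInf_le (not_in_self j)
  have h2 : j ≤ iota (c j) := by
    by_contra hc
    push_neg at hc
    exact (lt_irrefl _ (in_iff.mp (in_lt hc))).elim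
  omega

lemma cl_c_self (j : ℕ) : Cl j (c j) := by
  cases j with
  | zero => exact Or.inr rfl
  | succ m => exact Or.inr (Or.inr rfl)

lemma cl_c_succ (j : ℕ) : Cl (j+1) (c j) := Or.inr (Or.inl rfl)

lemma not_cl_two (j : ℕ) : ¬ Cl (j+2) (c j) := by
  rintro (h | h)
  · exact btw_not_rev (btw_c j) (Btw.symm h)
  · rcases h with h | h
    · exact c_ne_succ j h
    · exact c_ne_succ2 j h

lemma kappaC (j : ℕ) : kappa (c j) = j + 2 := by
  have h1 : kappa (c j) ≤ j + 2 := Nat.sInf_le (not_cl_two j)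
  have h2 : j + 2 ≤ kappa (c j) := by
    have := cl_iff.mp (cl_c_succ j)
    omega
  omega

lemma nonconv_kappa {w : ℚ} (h : ∀ j, w ≠ c j) : kappa w = iota w := by
  unfold kappa iota
  congr 1
  ext k
  simp only [Set.mem_setOf_eq]
  constructor
  · intro hc hin; exact hc (Or.inl hin)
  · rintro hin (h' | h')
    · exact hin h'
    · obtain ⟨j, _, he⟩ := ep_den h'
      exact h j he

noncomputable def Phi (w : ℚ) : ℕ := iota w + kappa w

lemma PhiC (j : ℕ) : Phi (c j) = 2 * j + 2 := by
  unfold Phi; rw [iotaC, kappaC]; omega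

lemma Phi_nonconv {w : ℚ} (h : ∀ j, w ≠ c j) : Phi w = 2 * iota w := by
  unfold Phi; rw [nonconv_kappa h]; omega

lemma Phi_pos_imp {w : ℚ} (h : 0 < Phi w) : 2 ≤ w := by
  have hk : 0 < kappa w := by
    have := iota_le_kappa w; unfold Phi at h; omega
  have := cl_iff.mpr hk
  rcases this with h' | h'
  · exact le_of_lt h'
  · rw [h', c0_eq]

-- no-crossing lemma
lemma no_cross_aux {u v a b : ℚ} (huv : RAdj u v) (hab : RAdj a b)
    (h1 : a < v) (h2 : v < b) (hu : (u < a ∧ u < b) ∨ (a < u ∧ b < u)) : False := by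
  have hvd := mediant hab h1 h2
  have hu1 : (1:ℤ) ≤ u.den := by exact_mod_cast u.pos
  have hv1 : (1:ℤ) ≤ v.den := by exact_mod_cast v.pos
  have ha1 : (1:ℤ) ≤ a.den := by exact_mod_cast a.pos
  have hb1 : (1:ℤ) ≤ b.den := by exact_mod_cast b.pos
  rcases hu with ⟨g1, g2⟩ | ⟨g1, g2⟩
  · have had := mediant huv g1 h1
    omega
  · have hbd := mediant (RAdj.symm' huv) h2 g2
    omega

lemma no_cross {u v a b : ℚ} (huv : RAdj u v) (hab : RAdj a b)
    (hv : Btw a b v) (hout : (u < a ∧ u < b) ∨ (a < u ∧ b < u)) : False := by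
  rcases hv with ⟨h1, h2⟩ | ⟨h1, h2⟩
  · exact no_cross_aux huv hab h1 h2 hout
  · exact no_cross_aux huv (RAdj.symm' hab) h1 h2 (by tauto)

-- E1
lemma edge_in_cl {u v : ℚ} (huv : RAdj u v) {k : ℕ} (hin : In k v) : Cl k u := by
  by_contra hc
  cases k with
  | zero =>
    have hu2 : u < 2 := by
      unfold Cl In Ep at hc
      push_neg at hc
      rcases hc with ⟨hc1, hc2⟩
      rw [c0_eq] at hc2
      rcases lt_trichotomy u 2 with h | h | h
      · exact h
      · exact absurd h hc2
      · exact absurd h (not_lt.mpr hc1)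
    have hv2 : (2:ℚ) < v := hin
    have := mediant huv hu2 hv2
    have h2den : ((2:ℚ)).den = 1 := rfl
    have hu1 : (1:ℤ) ≤ u.den := by exact_mod_cast u.pos
    have hv1 : (1:ℤ) ≤ v.den := by exact_mod_cast v.pos
    rw [h2den] at this
    omega
  | succ m =>
    unfold Cl In Ep at hc
    push_neg at hc
    obtain ⟨hc1, hcep⟩ := hc
    have hc2 : u ≠ c m := hcep.1
    have hc3 : u ≠ c (m+1) := hcep.2
    have hout := btw_out hc1 hc2 hc3
    exact no_cross huv (cRAdj m) hin hout


lemma iota_le_kappa_edge {u v : ℚ} (huv : RAdj u v) : iota v ≤ kappa u := by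
  by_contra hc
  push_neg at hc
  have h1 : In (kappa u) v := in_iff.mpr hc
  have h2 := edge_in_cl huv h1
  exact absurd (cl_iff.mp h2) (lt_irrefl _)

lemma phi_core {u v : ℚ} (huv : RAdj u v) : Phi v ≤ Phi u + 2 := by
  have e1 : iota v ≤ kappa u := iota_le_kappa_edge huv
  have e2 : iota u ≤ kappa v := iota_le_kappa_edge (RAdj.symm' huv)
  by_cases hcu : ∃ j, u = c j
  · obtain ⟨i, rfl⟩ := hcu
    rw [PhiC]
    rw [iotaC] at e2
    rw [kappaC] at e1
    by_cases hcv : ∃ j, v = c j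
    · obtain ⟨j, rfl⟩ := hcv
      rw [PhiC]
      rw [iotaC] at e1
      have hne2 : j ≠ i + 2 := by
        rintro rfl
        exact not_cRAdj2 i huv
      omega
    · push_neg at hcv
      rw [Phi_nonconv hcv]
      rw [nonconv_kappa hcv] at e2
      omega
  · push_neg at hcu
    rw [Phi_nonconv hcu]
    rw [nonconv_kappa hcu] at e1
    by_cases hcv : ∃ j, v = c j
    · obtain ⟨j, rfl⟩ := hcv
      rw [PhiC]
      rw [iotaC] at e1
      omega
    · push_neg at hcv
      rw [Phi_nonconv hcv]
      rw [nonconv_kappa hcv] at e2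
      omega


lemma RAdj.neg {u v : ℚ} (h : RAdj u v) : RAdj (-u) (-v) := by
  unfold RAdj at *
  have hn1 : (-u).num = -u.num := rfl
  have hn2 : (-v).num = -v.num := rfl
  have hd1 : (-u).den = u.den := rfl
  have hd2 : (-v).den = v.den := rfl
  rw [hn1, hn2, hd1, hd2]
  rw [show -u.num * (v.den:ℤ) - -v.num * (u.den:ℤ) = -(u.num * v.den - v.num * u.den) by ring]
  rw [abs_neg]
  exact h

noncomputable def Psi : Option ℚ → ℤ
  | none => 0
  | some w => (Phi w : ℤ) - (Phi (-w) : ℤ)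

lemma two_le_c (j : ℕ) : 2 ≤ c j := by
  cases j with
  | zero => rw [c0_eq]
  | succ m =>
    have : (2:ℚ) < c (m+1) := by
      have h := in_lt (show 0 < m + 1 by omega)
      exact h
    linarith

lemma Phi_neg_c (k : ℕ) : Phi (-(c k)) = 0 := by
  have h2 := two_le_c k
  by_contra hc
  have : 0 < Phi (-(c k)) := Nat.pos_of_ne_zero hc
  have := Phi_pos_imp this
  linarith

lemma PsiC (k : ℕ) : Psi (some (c k)) = 2 * k + 2 := by
  show (Phi (c k) : ℤ) - (Phi (-(c k)) : ℤ) = 2 * k + 2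
  rw [PhiC, Phi_neg_c]
  push_cast
  ring

lemma PsiNegC (k : ℕ) : Psi (some (-(c k))) = -(2 * k + 2) := by
  show (Phi (-(c k)) : ℤ) - (Phi (-(-(c k))) : ℤ) = _
  rw [neg_neg, PhiC, Phi_neg_c]
  push_cast
  ring

-- bound for integer vertices (neighbors of infinity)
lemma Phi_den_one {v : ℚ} (hv : v.den = 1) : Phi v ≤ 2 := by
  have hiota : iota v ≤ 1 := by
    by_contra hc
    push_neg at hc
    have h1 : In 1 v := in_iff.mpr (by omega)
    have := in_den_bound (k := 0) h1
    rw [hv] at this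
    have hq0 : (q 0 : ℤ) = 1 := rfl
    have hq1 : (q (0+1) : ℤ) = 2 := rfl
    omega
  by_cases hcv : ∃ j, v = c j
  · obtain ⟨j, rfl⟩ := hcv
    have : q j = 1 := hv
    have : j = 0 := by
      by_contra hj
      have := qge j
      omega
    subst this
    rw [PhiC]
  · push_neg at hcv
    rw [Phi_nonconv hcv]
    omega

lemma Phi_not_both {u v : ℚ} (huv : RAdj u v) (h1 : 0 < Phi u ∨ 0 < Phi v) :
    Phi (-u) = 0 ∧ Phi (-v) = 0 := by
  have h2le : 2 ≤ u ∨ 2 ≤ v := by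
    rcases h1 with h | h
    · exact Or.inl (Phi_pos_imp h)
    · exact Or.inr (Phi_pos_imp h)
  constructor
  · by_contra hc
    have hpos : 0 < Phi (-u) := Nat.pos_of_ne_zero hc
    have hnu : (2:ℚ) ≤ -u := Phi_pos_imp hpos
    rcases h2le with h | h
    · linarith
    · -- u ≤ -2 < 0 < 2 ≤ v : 0 strictly between u and v
      have := mediant huv (show u < 0 by linarith) (show (0:ℚ) < v by linarith)
      have hz : ((0:ℚ)).den = 1 := rfl
      rw [hz] at this
      have hu1 : (1:ℤ) ≤ u.den := by exact_mod_cast u.pos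
      have hv1 : (1:ℤ) ≤ v.den := by exact_mod_cast v.pos
      omega
  · by_contra hc
    have hpos : 0 < Phi (-v) := Nat.pos_of_ne_zero hc
    have hnv : (2:ℚ) ≤ -v := Phi_pos_imp hpos
    rcases h2le with h | h
    · have := mediant (RAdj.symm' huv) (show v < 0 by linarith) (show (0:ℚ) < u by linarith)
      have hz : ((0:ℚ)).den = 1 := rfl
      rw [hz] at this
      have hu1 : (1:ℤ) ≤ u.den := by exact_mod_cast u.pos
      have hv1 : (1:ℤ) ≤ v.den := by exact_mod_cast v.pos
      omega
    · linarith

lemma PsiLip {x y : Option ℚ} (h : Farey.Adj x y) : |Psi x - Psi y| ≤ 2 := by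
  match x, y with
  | none, none => exact absurd h (Farey.loopless.irrefl none)
  | none, some v =>
    have hv : v.den = 1 := h
    have h1 : Phi v ≤ 2 := Phi_den_one hv
    have h2 : Phi (-v) ≤ 2 := by
      have : (-v).den = 1 := hv
      exact Phi_den_one this
    have h3 : Phi v = 0 ∨ Phi (-v) = 0 := by
      by_contra hc
      push_neg at hc
      have p1 := Phi_pos_imp (Nat.pos_of_ne_zero hc.1)
      have p2 := Phi_pos_imp (Nat.pos_of_ne_zero hc.2)
      linarith
    show |(0:ℤ) - ((Phi v : ℤ) - (Phi (-v) : ℤ))| ≤ 2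
    rw [abs_le]
    rcases h3 with h3 | h3 <;> rw [h3] <;> constructor <;> push_cast <;> omega
  | some u, none =>
    have hv : u.den = 1 := h
    have h1 : Phi u ≤ 2 := Phi_den_one hv
    have h2 : Phi (-u) ≤ 2 := by
      have : (-u).den = 1 := hv
      exact Phi_den_one this
    have h3 : Phi u = 0 ∨ Phi (-u) = 0 := by
      by_contra hc
      push_neg at hc
      have p1 := Phi_pos_imp (Nat.pos_of_ne_zero hc.1)
      have p2 := Phi_pos_imp (Nat.pos_of_ne_zero hc.2)
      linarith
    show |((Phi u : ℤ) - (Phi (-u) : ℤ)) - 0| ≤ 2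
    rw [abs_le]
    rcases h3 with h3 | h3 <;> rw [h3] <;> constructor <;> push_cast <;> omega
  | some u, some v =>
    obtain ⟨hne, hadj⟩ := h
    have huv : RAdj u v := hadj
    have c1 : Phi v ≤ Phi u + 2 := phi_core huv
    have c2 : Phi u ≤ Phi v + 2 := phi_core (RAdj.symm' huv)
    have c3 : Phi (-v) ≤ Phi (-u) + 2 := phi_core (RAdj.neg huv)
    have c4 : Phi (-u) ≤ Phi (-v) + 2 := phi_core (RAdj.symm' (RAdj.neg huv))
    have key : (Phi u = Phi v) ∨ (Phi (-u) = Phi (-v)) := by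
      by_cases hz : Phi u = 0 ∧ Phi v = 0
      · exact Or.inl (hz.1.trans hz.2.symm)
      · have hpos : 0 < Phi u ∨ 0 < Phi v := by omega
        have := Phi_not_both huv hpos
        exact Or.inr (this.1.trans this.2.symm)
    show |((Phi u : ℤ) - (Phi (-u) : ℤ)) - ((Phi v : ℤ) - (Phi (-v) : ℤ))| ≤ 2
    rw [abs_le]
    rcases key with h | h <;> rw [h] <;> constructor <;> push_cast <;> omega


def g : ℤ → Option ℚ
  | Int.ofNat 0 => none
  | Int.ofNat (k+1) => some (c k)
  | Int.negSucc k => some (-(c k))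

lemma PsiG (m : ℤ) : Psi (g m) = 2 * m := by
  match m with
  | Int.ofNat 0 => rfl
  | Int.ofNat (k+1) =>
    show Psi (some (c k)) = _
    rw [PsiC]
    simp [Int.ofNat_eq_coe]
    push_cast
    ring
  | Int.negSucc k =>
    show Psi (some (-(c k))) = _
    rw [PsiNegC, Int.negSucc_eq]
    push_cast
    ring

lemma cAdj (k : ℕ) : Farey.Adj (some (c k)) (some (c (k+1))) :=
  ⟨c_ne_succ k, cRAdj k⟩

lemma cAdjNeg (k : ℕ) : Farey.Adj (some (-(c k))) (some (-(c (k+1)))) :=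
  ⟨fun h => c_ne_succ k (neg_injective h), RAdj.neg (cRAdj k)⟩

lemma c0_den : (c 0).den = 1 := rfl

lemma gAdj (m : ℤ) : Farey.Adj (g m) (g (m + 1)) := by
  match m with
  | Int.ofNat 0 =>
    show Farey.Adj none (some (c 0))
    exact c0_den
  | Int.ofNat (k+1) =>
    have : (Int.ofNat (k+1)) + 1 = Int.ofNat (k+2) := rfl
    rw [this]
    exact cAdj k
  | Int.negSucc 0 =>
    have : (Int.negSucc 0) + 1 = Int.ofNat 0 := rfl
    rw [this]
    show Farey.Adj (some (-(c 0))) none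
    show (-(c 0)).den = 1
    exact c0_den
  | Int.negSucc (k+1) =>
    have : (Int.negSucc (k+1)) + 1 = Int.negSucc k := rfl
    rw [this]
    exact (cAdjNeg k).symm

lemma gWalk (k : ℕ) : ∀ (m : ℤ), ∃ W : Farey.Walk (g m) (g (m + k)), W.length = k := by
  induction k with
  | zero => intro m; exact ⟨(SimpleGraph.Walk.nil).copy rfl (by norm_num), by simp⟩
  | succ j ih =>
    intro m
    obtain ⟨W, hW⟩ := ih (m + 1)
    refine ⟨(SimpleGraph.Walk.cons (gAdj m) W).copy rfl (congrArg g (by push_cast; ring)), ?_⟩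
    simp [hW]

lemma gReach (a b : ℤ) : Farey.Reachable (g a) (g b) := by
  rcases le_total a b with h | h
  · obtain ⟨W, _⟩ := gWalk (b - a).toNat a
    have : a + ((b - a).toNat : ℤ) = b := by omega
    rw [this] at W
    exact ⟨W⟩
  · obtain ⟨W, _⟩ := gWalk (a - b).toNat b
    have : b + ((a - b).toNat : ℤ) = a := by omega
    rw [this] at W
    exact ⟨W.reverse⟩

lemma walkLip {x y : Option ℚ} (W : Farey.Walk x y) : |Psi x - Psi y| ≤ 2 * W.length := by
  induction W with
  | nil => simp
  | @cons a bb cc h W ih =>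
    have h1 := PsiLip h
    have h2 : |Psi a - Psi cc| ≤ |Psi a - Psi bb| + |Psi bb - Psi cc| := abs_sub_le _ _ _
    simp only [SimpleGraph.Walk.length_cons]
    push_cast
    linarith

lemma distG (a b : ℤ) : ((Farey.dist (g a) (g b) : ℕ) : ℤ) = |a - b| := by
  have hub : (Farey.dist (g a) (g b) : ℤ) ≤ |a - b| := by
    rcases le_total a b with h | h
    · obtain ⟨W, hW⟩ := gWalk (b - a).toNat a
      have he : a + ((b - a).toNat : ℤ) = b := by omega
      have := SimpleGraph.dist_le (W.copy rfl (congrArg g he))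
      rw [SimpleGraph.Walk.length_copy, hW] at this
      have h2 : ((b - a).toNat : ℤ) = |a - b| := by
        rw [abs_sub_comm, abs_of_nonneg (by omega : (0:ℤ) ≤ b - a)]; omega
      omega
    · obtain ⟨W, hW⟩ := gWalk (a - b).toNat b
      have he : b + ((a - b).toNat : ℤ) = a := by omega
      have := SimpleGraph.dist_le (W.copy rfl (congrArg g he)).reverse
      rw [SimpleGraph.Walk.length_reverse, SimpleGraph.Walk.length_copy, hW] at this
      have h2 : ((a - b).toNat : ℤ) = |a - b| := by
        rw [abs_of_nonneg (by omega : (0:ℤ) ≤ a - b)]; omega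
      omega
  have hlb : |a - b| ≤ (Farey.dist (g a) (g b) : ℤ) := by
    obtain ⟨W, hW⟩ := (gReach a b).exists_walk_length_eq_dist
    have := walkLip W
    rw [hW, PsiG, PsiG] at this
    have : |2 * a - 2 * b| ≤ 2 * (Farey.dist (g a) (g b) : ℤ) := by exact_mod_cast this
    have h4 : |2 * a - 2 * b| = 2 * |a - b| := by
      rw [show 2*a - 2*b = 2*(a-b) by ring, abs_mul]
      norm_num
    omega
  omega


-- product graph lemmas
lemma dist_le_adj_left {V : Type*} {G : SimpleGraph V} {a b y : V} (h : G.Adj a b) :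
    G.dist a y ≤ G.dist b y + 1 := by
  by_cases hr : G.Reachable b y
  · obtain ⟨p, hp⟩ := hr.exists_walk_length_eq_dist
    have := SimpleGraph.dist_le (SimpleGraph.Walk.cons h p)
    rw [SimpleGraph.Walk.length_cons, hp] at this
    exact this
  · have hnr : ¬ G.Reachable a y := fun hay => hr (h.symm.reachable.trans hay)
    rw [SimpleGraph.dist_eq_zero_of_not_reachable hnr]
    omega

lemma prodLower {n : ℕ} : ∀ {x y : Fin n → Option ℚ} (W : (FareyPow n).Walk x y),
    ∑ i : Fin n, Farey.dist (x i) (y i) ≤ W.length := by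
  intro x y W
  induction W with
  | nil => simp [SimpleGraph.dist_self]
  | @cons a bb cc h W ih =>
    simp only [SimpleGraph.Walk.length_cons]
    obtain ⟨i₀, hadj, heq⟩ := h
    have hstep : ∀ i : Fin n, Farey.dist (a i) (cc i)
        ≤ Farey.dist (bb i) (cc i) + (if i = i₀ then 1 else 0) := by
      intro i
      by_cases hi : i = i₀
      · subst hi
        simpa using dist_le_adj_left hadj
      · rw [heq i hi]
        simp [hi]
    calc ∑ i : Fin n, Farey.dist (a i) (cc i)
        ≤ ∑ i : Fin n, (Farey.dist (bb i) (cc i) + (if i = i₀ then 1 else 0)) :=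
          Finset.sum_le_sum (fun i _ => hstep i)
      _ = (∑ i : Fin n, Farey.dist (bb i) (cc i)) + 1 := by
          rw [Finset.sum_add_distrib]
          congr 1
          simp
      _ ≤ W.length + 1 := by
          have := ih
          omega

lemma liftWalk {n : ℕ} (z : Fin n → Option ℚ) (i : Fin n) {a b : Option ℚ}
    (W : Farey.Walk a b) :
    ∃ W' : (FareyPow n).Walk (Function.update z i a) (Function.update z i b),
        W'.length = W.length := by
  induction W with
  | nil => exact ⟨SimpleGraph.Walk.nil, rfl⟩
  | @cons u v w h W ih =>
    obtain ⟨W', hW'⟩ := ih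
    have hadj : (FareyPow n).Adj (Function.update z i u) (Function.update z i v) := by
      refine ⟨i, ?_, ?_⟩
      · simpa using h
      · intro j hj
        simp [Function.update_of_ne hj]
    exact ⟨SimpleGraph.Walk.cons hadj W', by simp [hW']⟩

lemma prodWalk {n : ℕ} (s : Finset (Fin n)) :
    ∀ (x y : Fin n → Option ℚ), (∀ i, i ∉ s → x i = y i) →
    (∀ i, Farey.Reachable (x i) (y i)) →
    ∃ W : (FareyPow n).Walk x y, W.length ≤ ∑ i ∈ s, Farey.dist (x i) (y i) := by
  induction s using Finset.induction_on with
  | empty =>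
    intro x y hagree _
    have : x = y := funext fun i => hagree i (by simp)
    subst this
    exact ⟨SimpleGraph.Walk.nil, by simp⟩
  | @insert i s hi ih =>
    intro x y hagree hreach
    set z := Function.update x i (y i) with hz
    obtain ⟨p, hp⟩ := (hreach i).exists_walk_length_eq_dist
    obtain ⟨W1, hW1⟩ := liftWalk x i p
    have hx : Function.update x i (x i) = x := Function.update_eq_self i x
    have hag2 : ∀ j, j ∉ s → z j = y j := by
      intro j hj
      by_cases hji : j = i
      · subst hji
        show z j = y j
        rw [hz]
        exact Function.update_self j (y j) x
      · have hns : j ∉ insert i s := by simp [hji, hj]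
        have : z j = x j := by rw [hz]; exact Function.update_of_ne hji _ _
        rw [this]
        exact hagree j hns
    have hre2 : ∀ j, Farey.Reachable (z j) (y j) := by
      intro j
      by_cases hji : j = i
      · subst hji
        have : z j = y j := by rw [hz]; exact Function.update_self j (y j) x
        rw [this]
      · have : z j = x j := by rw [hz]; exact Function.update_of_ne hji _ _
        rw [this]
        exact hreach j
    obtain ⟨W2, hW2⟩ := ih z y hag2 hre2
    refine ⟨(W1.copy hx rfl).append W2, ?_⟩
    rw [SimpleGraph.Walk.length_append, SimpleGraph.Walk.length_copy, hW1, hp]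
    rw [Finset.sum_insert hi]
    have hsum : ∑ j ∈ s, Farey.dist (z j) (y j) = ∑ j ∈ s, Farey.dist (x j) (y j) := by
      apply Finset.sum_congr rfl
      intro j hj
      have hne : j ≠ i := fun he => hi (he ▸ hj)
      have : z j = x j := by rw [hz]; exact Function.update_of_ne hne _ _
      rw [this]
    omega
end FE

/-- For every `n ≥ 1`, there is an isometric embedding of `ℤⁿ` with the ℓ¹
metric into the n-fold box product of the Farey graph. -/
theorem fareyPow_isometric_embedding_int_l1 (n : ℕ) (hn : 1 ≤ n) :
    ∃ f : (Fin n → ℤ) → (Fin n → Option ℚ),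
      ∀ x y : Fin n → ℤ,
        ((FareyPow n).dist (f x) (f y) : ℤ) = ∑ i : Fin n, |x i - y i| := by
  refine ⟨fun x i => FE.g (x i), fun x y => ?_⟩
  have hdist : (FareyPow n).dist (fun i => FE.g (x i)) (fun i => FE.g (y i))
      = ∑ i : Fin n, Farey.dist (FE.g (x i)) (FE.g (y i)) := by
    apply le_antisymm
    · obtain ⟨W, hW⟩ := FE.prodWalk Finset.univ (fun i => FE.g (x i)) (fun i => FE.g (y i))
        (fun i hi => absurd (Finset.mem_univ i) hi) (fun i => FE.gReach (x i) (y i))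
      exact le_trans (SimpleGraph.dist_le W) hW
    · obtain ⟨W, _⟩ := FE.prodWalk Finset.univ (fun i => FE.g (x i)) (fun i => FE.g (y i))
        (fun i hi => absurd (Finset.mem_univ i) hi) (fun i => FE.gReach (x i) (y i))
      have hreach : (FareyPow n).Reachable (fun i => FE.g (x i)) (fun i => FE.g (y i)) := ⟨W⟩
      obtain ⟨W0, hW0⟩ := hreach.exists_walk_length_eq_dist
      have := FE.prodLower W0
      omega
  rw [hdist]
  push_cast
  apply Finset.sum_congr rfl
  intro i _
  exact FE.distG (x i) (y i)
end
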